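/- Let s be a binary string with |s| ≥ 2 and t_1,…,t_n binary strings with Σ_{i=1}^n |t_i| = |s|. Every tree decomposition of the graph G(s; t_1,…,t_n) of width at most 16 with at most |s| bags is a path decomposition: it has exactly |s| bags, its underlying tree is a path, and there is an ordering X_1,…,X_{|s|} of the bags along this path such that C_i ∪ C_{i+1} ⊆ X_i for each 1 ≤ i ≤ |s|. -/
import Mathlib


/-- A solution of the Orthogonal Vector Crafting instance `(s; t_1,…,t_n)`: a reordering `u`
of the collection `ts` such that at no position do `s` and the concatenation of `u` both
have a `1`. -/
def OVCSol (s : List Bool) (ts : List (List Bool)) : Prop :=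
  ∃ u : List (List Bool), u.Perm ts ∧
    ∀ p : ℕ, ¬(s.getD p false = true ∧ u.flatten.getD p false = true)

/-- Vertices of the graph `G(s; t_1,…,t_n)`:
`Sum.inl (Sum.inl (i, a))` is the `a`-th vertex of the `6`-clique `C_{i+1}`,
`Sum.inl (Sum.inr k)` is the vertex `s_{k+1}` (present when `s(k+1) = 1`),
`Sum.inr (Sum.inl ⟨i, j, a⟩)` is the `a`-th vertex of the `2`-clique `T_{i+1,j+1}`, and
`Sum.inr (Sum.inr ⟨i, j⟩)` is the vertex `t_{i+1,j+1}` (present when `t_{i+1}(j+1) = 1`). -/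
abbrev GV (s : List Bool) (ts : List (List Bool)) : Type :=
  ((Fin (s.length + 1) × Fin 6) ⊕ {k : Fin s.length // s.get k = true}) ⊕
  ((Σ i : Fin ts.length, Fin ((ts.get i).length + 1) × Fin 2) ⊕
    (Σ i : Fin ts.length, {j : Fin (ts.get i).length // (ts.get i).get j = true}))

/-- The edges of `G(s; t_1,…,t_n)` (up to symmetry): all pairs inside each clique `C_i`
resp. `T_{i,j}`, all pairs between consecutive cliques `C_i, C_{i+1}` resp.
`T_{i,j}, T_{i,j+1}`, each `s_k` joined to all of `C_k ∪ C_{k+1}`, and each `t_{i,j}` joined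
to all of `T_{i,j} ∪ T_{i,j+1}`. -/
def gRel (s : List Bool) (ts : List (List Bool)) : GV s ts → GV s ts → Prop
  | Sum.inl (Sum.inl (i, a)), Sum.inl (Sum.inl (j, b)) =>
      (i = j ∧ a ≠ b) ∨ i.val + 1 = j.val
  | Sum.inl (Sum.inl (i, _)), Sum.inl (Sum.inr k) =>
      i.val = k.val.val ∨ i.val = k.val.val + 1
  | Sum.inr (Sum.inl a), Sum.inr (Sum.inl b) =>
      a.1 = b.1 ∧ ((a.2.1.val = b.2.1.val ∧ a.2.2 ≠ b.2.2) ∨ a.2.1.val + 1 = b.2.1.val)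
  | Sum.inr (Sum.inl a), Sum.inr (Sum.inr b) =>
      a.1 = b.1 ∧ (a.2.1.val = b.2.val.val ∨ a.2.1.val = b.2.val.val + 1)
  | _, _ => False

/-- The graph `G(s; t_1,…,t_n)`. -/
def GGraph (s : List Bool) (ts : List (List Bool)) : SimpleGraph (GV s ts) :=
  SimpleGraph.fromRel (gRel s ts)

/-- `(T, X)` is a valid decomposition of `G`: every vertex is in some bag, for every vertex
the set of nodes whose bag contains it induces a connected (hence nonempty) subgraph of `T`,
and every edge of `G` is contained in some bag. -/
def IsValidDecomp {V ι : Type} (G : SimpleGraph V) (T : SimpleGraph ι) (X : ι → Set V) :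
    Prop :=
  (∀ v : V, ∃ t : ι, v ∈ X t) ∧
  (∀ v : V, (T.induce {t : ι | v ∈ X t}).Connected) ∧
  (∀ u v : V, G.Adj u v → ∃ t : ι, u ∈ X t ∧ v ∈ X t)

/-! ### Auxiliary material: subtrees of a tree and the Helly property -/

open SimpleGraph Walk

section TreePart

variable {ι : Type} {T : SimpleGraph ι}

/-- A set is "subtree-like": any path between two of its members stays inside. -/
def Subt (T : SimpleGraph ι) (S : Set ι) : Prop :=
  ∀ ⦃a⦄, a ∈ S → ∀ ⦃b⦄, b ∈ S → ∀ p : T.Walk a b, p.IsPath → ∀ x ∈ p.support, x ∈ S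

lemma Subt.inter {S S' : Set ι} (h : Subt T S) (h' : Subt T S') : Subt T (S ∩ S') :=
  fun _ ha _ hb p hp x hx => ⟨h ha.1 hb.1 p hp x hx, h' ha.2 hb.2 p hp x hx⟩

lemma subt_of_connected (hT : T.IsAcyclic) {S : Set ι}
    (h : (T.induce S).Connected) : Subt T S := by
  classical
  intro a ha b hb p hp x hx
  obtain ⟨w⟩ := h.preconnected ⟨a, ha⟩ ⟨b, hb⟩
  let hom : T.induce S →g T := ⟨Subtype.val, fun {u v} h => h⟩
  have hsub : ∀ y ∈ (w.map hom).support, y ∈ S := by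
    intro y hy
    rw [Walk.support_map, List.mem_map] at hy
    obtain ⟨z, _, rfl⟩ := hy
    exact z.2
  have heq := hT.path_unique ⟨p, hp⟩ (w.map hom).toPath
  have hx' : x ∈ ((w.map hom).toPath : T.Walk a b).support := by
    rw [← heq]; exact hx
  exact hsub x (Walk.support_bypass_subset _ hx')

/-- First vertex of a walk lying in a given set which contains the endpoint. -/
lemma exists_first_hit (P : Set ι) {z x : ι} (r : T.Walk z x) (hx : x ∈ P) :
    ∃ m, m ∈ P ∧ ∃ r1 : T.Walk z m, r1.support ⊆ r.support ∧
      ∀ y ∈ r1.support, y ∈ P → y = m := by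
  induction r with
  | nil =>
    exact ⟨_, hx, Walk.nil, fun y hy => hy, fun y hy _ => by simpa using hy⟩
  | @cons u v w h r ih =>
    by_cases hu : u ∈ P
    · exact ⟨u, hu, Walk.nil, by simp, fun y hy _ => by simpa using hy⟩
    · obtain ⟨m, hm, r1, hsub, hfirst⟩ := ih hx
      refine ⟨m, hm, Walk.cons h r1, ?_, ?_⟩
      · intro y hy
        rw [Walk.support_cons] at hy ⊢
        simp only [List.mem_cons] at hy ⊢
        rcases hy with rfl | hy
        · exact Or.inl rfl
        · exact Or.inr (hsub hy)
      · intro y hy hyP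
        rw [Walk.support_cons] at hy
        simp only [List.mem_cons] at hy
        rcases hy with rfl | hy
        · exact absurd hyP hu
        · exact hfirst y hy hyP

lemma helly3 (hT : T.IsTree) {A B C : Set ι} (hA : Subt T A) (hB : Subt T B) (hC : Subt T C)
    (hab : (A ∩ B).Nonempty) (hbc : (B ∩ C).Nonempty) (hac : (A ∩ C).Nonempty) :
    (A ∩ B ∩ C).Nonempty := by
  classical
  obtain ⟨x, hxA, hxB⟩ := hab
  obtain ⟨y, hyB, hyC⟩ := hbc
  obtain ⟨z, hzA, hzC⟩ := hac
  obtain ⟨p, hp, -⟩ := hT.existsUnique_path x y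
  obtain ⟨r, hr, -⟩ := hT.existsUnique_path z x
  have hxP : x ∈ {t | t ∈ p.support} := Walk.start_mem_support p
  obtain ⟨m, hmP, r1, hr1sub, hfirst⟩ := exists_first_hit {t | t ∈ p.support} r hxP
  have hq1p : r1.bypass.IsPath := Walk.bypass_isPath r1
  have hq1sub : r1.bypass.support ⊆ r1.support := Walk.support_bypass_subset r1
  have hmp : m ∈ p.support := hmP
  have hmB : m ∈ B := hB hxB hyB p hp m hmp
  have hmA : m ∈ A := hA hzA hxA r hr m (hr1sub (Walk.end_mem_support r1))
  have hd := hp.dropUntil hmp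
  have hdsup : (p.dropUntil m hmp).support ⊆ p.support := Walk.support_dropUntil_subset p hmp
  have hmC : m ∈ C := by
    have hw : (r1.bypass.append (p.dropUntil m hmp)).IsPath := by
      rw [Walk.isPath_def, Walk.support_append]
      apply List.Nodup.append
      · exact hq1p.support_nodup
      · have hnd := hd.support_nodup
        rw [Walk.support_eq_cons (p.dropUntil m hmp)] at hnd
        exact hnd.of_cons
      · intro y hy1 hy2
        have hyP : y ∈ p.support := hdsup (List.mem_of_mem_tail hy2)
        have hym : y = m := hfirst y (hq1sub hy1) hyP
        subst hym
        have hnd := hd.support_nodup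
        rw [Walk.support_eq_cons (p.dropUntil y hmp)] at hnd
        exact (List.nodup_cons.mp hnd).1 hy2
    have hmw : m ∈ (r1.bypass.append (p.dropUntil m hmp)).support := by
      rw [Walk.mem_support_append_iff]
      exact Or.inl (Walk.end_mem_support _)
    exact hC hzC hyC _ hw m hmw
  exact ⟨m, ⟨hmA, hmB⟩, hmC⟩

lemma hellyList (hT : T.IsTree) [Nonempty ι] (L : List (Set ι))
    (hsub : ∀ S ∈ L, Subt T S)
    (hpair : ∀ S ∈ L, ∀ S' ∈ L, (S ∩ S').Nonempty) : ∃ t, ∀ S ∈ L, t ∈ S := by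
  suffices H : ∀ n (L : List (Set ι)), L.length = n → (∀ S ∈ L, Subt T S) →
      (∀ S ∈ L, ∀ S' ∈ L, (S ∩ S').Nonempty) → ∃ t, ∀ S ∈ L, t ∈ S from
    H L.length L rfl hsub hpair
  clear hsub hpair L
  intro n
  induction n using Nat.strong_induction_on with
  | _ n ih =>
    intro L hn hsub hpair
    match L, hn with
    | [], _ => exact ⟨Classical.arbitrary ι, by simp⟩
    | [S], _ =>
      obtain ⟨t, ht, -⟩ := hpair S (by simp) S (by simp)
      exact ⟨t, by simpa using ht⟩
    | A :: B :: L', hn =>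
      have hABsub : Subt T (A ∩ B) := (hsub A (by simp)).inter (hsub B (by simp))
      have key : ∀ S ∈ (A ∩ B) :: L', ∀ S' ∈ (A ∩ B) :: L', (S ∩ S').Nonempty := by
        intro S hS S' hS'
        rcases List.mem_cons.mp hS with rfl | hS <;>
          rcases List.mem_cons.mp hS' with rfl | hS'
        · simpa [Set.inter_assoc, Set.inter_self] using hpair A (by simp) B (by simp)
        · exact helly3 hT (hsub A (by simp)) (hsub B (by simp)) (hsub S' (by simp [hS']))
            (hpair A (by simp) B (by simp)) (hpair B (by simp) S' (by simp [hS']))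
            (hpair A (by simp) S' (by simp [hS']))
        · obtain ⟨t, ht⟩ := helly3 hT (hsub A (by simp)) (hsub B (by simp))
            (hsub S (by simp [hS]))
            (hpair A (by simp) B (by simp)) (hpair B (by simp) S (by simp [hS]))
            (hpair A (by simp) S (by simp [hS]))
          exact ⟨t, ht.2, ht.1⟩
        · exact hpair S (by simp [hS]) S' (by simp [hS'])
      obtain ⟨t, ht⟩ := ih (L'.length + 1) (by simp at hn; omega) ((A ∩ B) :: L')
        rfl
        (by
          intro S hS
          rcases List.mem_cons.mp hS with rfl | hS
          · exact hABsub
          · exact hsub S (by simp [hS]))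
        key
      refine ⟨t, ?_⟩
      intro S hS
      rcases List.mem_cons.mp hS with rfl | hS
      · exact (ht (S ∩ B) (by simp)).1
      rcases List.mem_cons.mp hS with rfl | hS
      · exact (ht (A ∩ S) (by simp)).2
      · exact ht S (by simp [hS])

lemma adj_of_two (x y : ι) (p : T.Walk x y) (hxy : x ≠ y)
    (hall : ∀ u ∈ p.support, u = x ∨ u = y) : T.Adj x y := by
  cases p with
  | nil => exact absurd rfl hxy
  | @cons _ c _ h q =>
    rcases hall c (by simp [Walk.support_cons, Walk.start_mem_support]) with rfl | rfl
    · exact absurd rfl h.ne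
    · exact h

end TreePart

/-! ### Auxiliary material: the cliques of `G(s; t_1,…,t_n)` -/

section GraphPart

variable (s : List Bool) (ts : List (List Bool))

/-- The clique `C_{c+1}` as a finset. -/
def CFin (c : Fin (s.length + 1)) : Finset (GV s ts) :=
  Finset.univ.image (fun a : Fin 6 => Sum.inl (Sum.inl (c, a)))

/-- The union of two consecutive cliques. -/
def KFin (i : Fin s.length) : Finset (GV s ts) :=
  CFin s ts i.castSucc ∪ CFin s ts i.succ

lemma mem_CFin {c : Fin (s.length + 1)} {v : GV s ts} :
    v ∈ CFin s ts c ↔ ∃ a : Fin 6, v = Sum.inl (Sum.inl (c, a)) := by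
  rw [CFin, Finset.mem_image]
  constructor
  · rintro ⟨a, -, rfl⟩; exact ⟨a, rfl⟩
  · rintro ⟨a, rfl⟩; exact ⟨a, Finset.mem_univ a, rfl⟩

lemma card_CFin (c : Fin (s.length + 1)) : (CFin s ts c).card = 6 := by
  rw [CFin, Finset.card_image_of_injective _ (fun a b h => by simpa using h)]
  simp

lemma disj_CFin {c d : Fin (s.length + 1)} (h : c ≠ d) :
    Disjoint (CFin s ts c) (CFin s ts d) := by
  rw [Finset.disjoint_left]
  intro v hv hv'
  rw [mem_CFin] at hv hv'
  obtain ⟨a, rfl⟩ := hv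
  obtain ⟨b, hb⟩ := hv'
  have : c = d ∧ a = b := by simpa using hb
  exact h this.1

lemma card_KFin (i : Fin s.length) : (KFin s ts i).card = 12 := by
  rw [KFin, Finset.card_union_of_disjoint
    (disj_CFin s ts (show i.castSucc ≠ i.succ by simp [Fin.ext_iff]))]
  simp [card_CFin]

lemma mem_KFin {i : Fin s.length} {v : GV s ts} :
    v ∈ KFin s ts i ↔ ∃ c a, (c = i.castSucc ∨ c = i.succ) ∧
      v = Sum.inl (Sum.inl (c, a)) := by
  constructor
  · intro hv
    rcases Finset.mem_union.mp hv with hv | hv <;> rw [mem_CFin] at hv <;>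
      obtain ⟨a, rfl⟩ := hv
    · exact ⟨_, a, Or.inl rfl, rfl⟩
    · exact ⟨_, a, Or.inr rfl, rfl⟩
  · rintro ⟨c, a, (rfl | rfl), rfl⟩
    · exact Finset.mem_union_left _ (mem_CFin s ts |>.2 ⟨a, rfl⟩)
    · exact Finset.mem_union_right _ (mem_CFin s ts |>.2 ⟨a, rfl⟩)

lemma adj_KFin {i : Fin s.length} {v w : GV s ts} (hv : v ∈ KFin s ts i)
    (hw : w ∈ KFin s ts i) (hne : v ≠ w) : (GGraph s ts).Adj v w := by
  rw [mem_KFin] at hv hw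
  obtain ⟨c, a, hc, rfl⟩ := hv
  obtain ⟨d, b, hd, rfl⟩ := hw
  rw [GGraph, SimpleGraph.fromRel_adj]
  refine ⟨hne, ?_⟩
  simp only [gRel]
  rcases hc with rfl | rfl <;> rcases hd with rfl | rfl
  · exact Or.inl (Or.inl ⟨rfl, fun h => hne (by rw [h])⟩)
  · exact Or.inl (Or.inr (by simp))
  · exact Or.inr (Or.inr (by simp))
  · exact Or.inl (Or.inl ⟨rfl, fun h => hne (by rw [h])⟩)

/-- A bag containing `K_i` and an extra clique `C_c` is too big. -/
lemma bag_big {ι : Type} {X : ι → Set (GV s ts)} (t : ι) (i : Fin s.length)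
    (c : Fin (s.length + 1)) (hc1 : c ≠ i.castSucc) (hc2 : c ≠ i.succ)
    (hK : ∀ v ∈ KFin s ts i, v ∈ X t) (hC : ∀ v ∈ CFin s ts c, v ∈ X t)
    (hw : (X t).ncard ≤ 17) : False := by
  classical
  have hsub : ↑(KFin s ts i ∪ CFin s ts c) ⊆ X t := by
    intro v hv
    rcases Finset.mem_union.mp hv with h | h
    exacts [hK v h, hC v h]
  have hdisj : Disjoint (KFin s ts i) (CFin s ts c) := by
    rw [KFin, Finset.disjoint_union_left]
    exact ⟨disj_CFin s ts (Ne.symm hc1), disj_CFin s ts (Ne.symm hc2)⟩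
  have hcard : (KFin s ts i ∪ CFin s ts c).card = 18 := by
    rw [Finset.card_union_of_disjoint hdisj, card_KFin, card_CFin]
  have h18 : 18 ≤ (X t).ncard := by
    have h1 : ((KFin s ts i ∪ CFin s ts c : Finset (GV s ts)) : Set (GV s ts)).ncard = 18 := by
      rw [Set.ncard_coe_finset, hcard]
    rw [← h1]
    exact Set.ncard_le_ncard hsub (Set.toFinite _)
  omega

end GraphPart

/-- Every tree decomposition of `G(s; t_1,…,t_n)` of width at most `16` with at most `|s|`
bags is a path decomposition: it has exactly `|s|` bags, its underlying tree is a path, and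
the bags can be ordered along this path as `X_1,…,X_{|s|}` with `C_i ∪ C_{i+1} ⊆ X_i`. -/
theorem treeDecomp_is_pathDecomp (s : List Bool) (ts : List (List Bool))
    (hs : 2 ≤ s.length)
    (hlen : (ts.map List.length).sum = s.length)
    (ι : Type) [Fintype ι] (T : SimpleGraph ι) (hT : T.IsTree)
    (X : ι → Set (GV s ts))
    (hdec : IsValidDecomp (GGraph s ts) T X)
    (hwidth : ∀ t : ι, (X t).ncard ≤ 17)
    (hbags : Fintype.card ι ≤ s.length) :
    Fintype.card ι = s.length ∧
    ∃ e : Fin s.length ≃ ι,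
      (∀ a b : Fin s.length, T.Adj (e a) (e b) ↔ (a.val + 1 = b.val ∨ b.val + 1 = a.val)) ∧
      (∀ i : Fin s.length, ∀ x : Fin 6,
        (Sum.inl (Sum.inl (i.castSucc, x)) : GV s ts) ∈ X (e i) ∧
        (Sum.inl (Sum.inl (i.succ, x)) : GV s ts) ∈ X (e i)) := by
  classical
  obtain ⟨hvert, hconn, hedge⟩ := hdec
  have hι : Nonempty ι := by
    obtain ⟨t, -⟩ := hvert (Sum.inl (Sum.inl (⟨0, by omega⟩, 0)))
    exact ⟨t⟩
  have hSub : ∀ v : GV s ts, Subt T {t | v ∈ X t} := fun v =>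
    subt_of_connected hT.IsAcyclic (hconn v)
  -- each `K_i` is contained in some bag
  have hKbag : ∀ i : Fin s.length, ∃ t, ∀ v ∈ KFin s ts i, v ∈ X t := by
    intro i
    obtain ⟨t, ht⟩ := hellyList hT ((KFin s ts i).toList.map fun v => {t | v ∈ X t})
      (by
        intro S hS
        simp only [List.mem_map] at hS
        obtain ⟨v, -, rfl⟩ := hS
        exact hSub v)
      (by
        intro S hS S' hS'
        simp only [List.mem_map] at hS hS'
        obtain ⟨v, hv, rfl⟩ := hS
        obtain ⟨w, hw, rfl⟩ := hS'
        by_cases hvw : v = w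
        · subst hvw
          obtain ⟨t, ht⟩ := hvert v
          exact ⟨t, ht, ht⟩
        · obtain ⟨t, h1, h2⟩ := hedge v w
            (adj_KFin s ts (Finset.mem_toList.mp hv) (Finset.mem_toList.mp hw) hvw)
          exact ⟨t, h1, h2⟩)
    exact ⟨t, fun v hv =>
      ht {t | v ∈ X t} (List.mem_map.mpr ⟨v, Finset.mem_toList.mpr hv, rfl⟩)⟩
  choose f hf using hKbag
  -- f is injective
  have hinj : Function.Injective f := by
    intro i j hij
    by_contra hne
    have hvij : j.val ≠ i.val := fun h => hne (Fin.ext h.symm)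
    have hc : ∃ c : Fin (s.length + 1), (c = j.castSucc ∨ c = j.succ) ∧
        c ≠ i.castSucc ∧ c ≠ i.succ := by
      by_cases h : j.val = i.val + 1
      · refine ⟨j.succ, Or.inr rfl, ?_, ?_⟩ <;>
          (simp only [Ne, Fin.ext_iff, Fin.val_succ, Fin.coe_castSucc]; omega)
      · refine ⟨j.castSucc, Or.inl rfl, ?_, ?_⟩ <;>
          (simp only [Ne, Fin.ext_iff, Fin.val_succ, Fin.coe_castSucc]; omega)
    obtain ⟨c, hcj, hc1, hc2⟩ := hc
    refine bag_big s ts (f i) i c hc1 hc2 (hf i) (fun v hv => ?_) (hwidth (f i))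
    have hvK : v ∈ KFin s ts j := by
      rcases hcj with rfl | rfl
      · exact Finset.mem_union_left _ hv
      · exact Finset.mem_union_right _ hv
    rw [hij]
    exact hf j v hvK
  have hcard : Fintype.card ι = s.length := by
    refine le_antisymm hbags ?_
    have := Fintype.card_le_of_injective f hinj
    simpa using this
  -- the equivalence
  have hbij : Function.Bijective f :=
    (Fintype.bijective_iff_injective_and_card f).mpr ⟨hinj, by simp [hcard]⟩
  set e : Fin s.length ≃ ι := Equiv.ofBijective f hbij with he
  have heapp : ∀ i, e i = f i := fun i => rfl
  -- consecutive bags are adjacent in T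
  have hadj : ∀ i j : Fin s.length, i.val + 1 = j.val → T.Adj (f i) (f j) := by
    intro i j hij1
    have hne : f i ≠ f j := by
      intro h
      have := hinj h
      rw [this] at hij1
      omega
    have hcs : j.castSucc = i.succ := Fin.ext (by simp [← hij1])
    obtain ⟨p, hp, -⟩ := hT.existsUnique_path (f i) (f j)
    apply adj_of_two _ _ p hne
    intro u hu
    by_contra hcon
    push_neg at hcon
    obtain ⟨hui, huj⟩ := hcon
    have hfk : f (e.symm u) = u := e.apply_symm_apply u
    set k := e.symm u with hk
    have hki : k.val ≠ i.val := by
      intro h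
      exact hui (by rw [← hfk, Fin.ext h])
    have hkj : k.val ≠ j.val := by
      intro h
      exact huj (by rw [← hfk, Fin.ext h])
    refine bag_big s ts u k i.succ ?_ ?_ (hfk ▸ hf k) (fun v hv => ?_) (hwidth u)
    · simp only [Ne, Fin.ext_iff, Fin.val_succ, Fin.coe_castSucc]; omega
    · simp only [Ne, Fin.ext_iff, Fin.val_succ]; omega
    · rw [mem_CFin] at hv
      obtain ⟨a, rfl⟩ := hv
      have hvi : (Sum.inl (Sum.inl (i.succ, a)) : GV s ts) ∈ X (f i) :=
        hf i _ (mem_KFin s ts |>.2 ⟨i.succ, a, Or.inr rfl, rfl⟩)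
      have hvj : (Sum.inl (Sum.inl (i.succ, a)) : GV s ts) ∈ X (f j) :=
        hf j _ (mem_KFin s ts |>.2 ⟨i.succ, a, Or.inl hcs.symm, rfl⟩)
      exact hSub _ hvi hvj p hp u hu
  -- edge counting: the consecutive edges are all the edges of T
  have hg2 : ∀ a : Fin (s.length - 1), a.val < s.length := fun a => by
    have := a.isLt; omega
  have hg3 : ∀ a : Fin (s.length - 1), a.val + 1 < s.length := fun a => by
    have := a.isLt; omega
  set g : Fin (s.length - 1) → Sym2 ι :=
    fun a => s(f ⟨a.val, hg2 a⟩, f ⟨a.val + 1, hg3 a⟩) with hgdef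
  have hginj : Function.Injective g := by
    intro a b hab
    simp only [hgdef, Sym2.eq_iff] at hab
    rcases hab with ⟨h1, h2⟩ | ⟨h1, h2⟩
    · have h1' := congrArg Fin.val (hinj h1)
      simp only at h1'
      exact Fin.ext (by omega)
    · have h1' := congrArg Fin.val (hinj h1)
      have h2' := congrArg Fin.val (hinj h2)
      simp only at h1' h2'
      omega
  have hEFcard : (Finset.image g Finset.univ).card = s.length - 1 := by
    rw [Finset.card_image_of_injective _ hginj, Finset.card_univ, Fintype.card_fin]
  have hsubEF : Finset.image g Finset.univ ⊆ T.edgeFinset := by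
    intro x hx
    obtain ⟨a, -, rfl⟩ := Finset.mem_image.mp hx
    rw [SimpleGraph.mem_edgeFinset]
    exact hadj _ _ rfl
  have hTE : T.edgeFinset.card + 1 = Fintype.card ι := hT.card_edgeFinset
  have hEq : Finset.image g Finset.univ = T.edgeFinset :=
    Finset.eq_of_subset_of_card_le hsubEF (by omega)
  refine ⟨hcard, e, fun a b => ⟨?_, ?_⟩, fun i x => ?_⟩
  · intro h
    have hmem : s(e a, e b) ∈ T.edgeFinset := SimpleGraph.mem_edgeFinset.mpr h
    rw [← hEq, Finset.mem_image] at hmem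
    obtain ⟨c, -, hc⟩ := hmem
    rw [hgdef, heapp, heapp, Sym2.eq_iff] at hc
    rcases hc with ⟨h1, h2⟩ | ⟨h1, h2⟩
    · have h1' := congrArg Fin.val (hinj h1)
      have h2' := congrArg Fin.val (hinj h2)
      simp only at h1' h2'
      omega
    · have h1' := congrArg Fin.val (hinj h1)
      have h2' := congrArg Fin.val (hinj h2)
      simp only at h1' h2'
      omega
  · intro h
    rcases h with h | h
    · rw [heapp, heapp]
      exact hadj a b h
    · rw [heapp, heapp]
      exact (hadj b a h).symm
  · rw [heapp]
    exact ⟨hf i _ (mem_KFin s ts |>.2 ⟨i.castSucc, x, Or.inl rfl, rfl⟩),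
      hf i _ (mem_KFin s ts |>.2 ⟨i.succ, x, Or.inr rfl, rfl⟩)⟩
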